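/- Let K be a field and q ∈ K an element that is not a root of unity. In the quantum plane B = B(q), consider the left ideals I = B(ab−1)(a−1) ⊆ J = B(a−1). Then V = J/I is a simple left B-module. -/

import Mathlib

noncomputable section

open FreeAlgebra

/-- Defining relation of the quantum plane `B(q)`: `a * b = q • (b * a)`, where
`ι K 0` plays the role of `a` and `ι K 1` plays the role of `b`. -/
inductive QuantumPlaneRel (K : Type) [Field K] (q : K) :
    FreeAlgebra K (Fin 2) → FreeAlgebra K (Fin 2) → Prop
  | rel : QuantumPlaneRel K q (ι K (0 : Fin 2) * ι K (1 : Fin 2))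
      (q • (ι K (1 : Fin 2) * ι K (0 : Fin 2)))

/-- The coordinate algebra of the quantum plane `B(q)`. -/
abbrev QuantumPlane (K : Type) [Field K] (q : K) : Type :=
  RingQuot (QuantumPlaneRel K q)

/-- The generator `a` of the quantum plane. -/
def QuantumPlane.a (K : Type) [Field K] (q : K) : QuantumPlane K q :=
  RingQuot.mkAlgHom K (QuantumPlaneRel K q) (ι K (0 : Fin 2))

/-- The generator `b` of the quantum plane. -/
def QuantumPlane.b (K : Type) [Field K] (q : K) : QuantumPlane K q :=
  RingQuot.mkAlgHom K (QuantumPlaneRel K q) (ι K (1 : Fin 2))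

namespace QPAux

section

variable (K : Type) [Field K] (q : K)

local notation "𝐚" => QuantumPlane.a K q
local notation "𝐛" => QuantumPlane.b K q
local notation "𝐁" => QuantumPlane K q

theorem a_mul_b : 𝐚 * 𝐛 = q • (𝐛 * 𝐚) := by
  have h := RingQuot.mkAlgHom_rel K (QuantumPlaneRel.rel (K := K) (q := q))
  simpa [QuantumPlane.a, QuantumPlane.b, map_mul, map_smul] using h

theorem pow_a_mul_b (n : ℕ) : 𝐚 ^ n * 𝐛 = q ^ n • (𝐛 * 𝐚 ^ n) := by
  induction n with
  | zero => simp
  | succ n ih =>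
    rw [pow_succ, mul_assoc, a_mul_b, mul_smul_comm, ← mul_assoc, ih,
      smul_mul_assoc, mul_assoc, smul_smul, ← pow_succ', pow_succ]

/-- monomial `b^i * a^j`. -/
def mono (p : ℕ × ℕ) : 𝐁 := 𝐛 ^ p.1 * 𝐚 ^ p.2

theorem mono_mul_a (p : ℕ × ℕ) : mono K q p * 𝐚 = mono K q (p.1, p.2 + 1) := by
  simp [mono, mul_assoc, pow_succ]

theorem mono_mul_b (p : ℕ × ℕ) :
    mono K q p * 𝐛 = q ^ p.2 • mono K q (p.1 + 1, p.2) := by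
  simp only [mono]
  rw [mul_assoc, pow_a_mul_b, mul_smul_comm, ← mul_assoc, ← pow_succ]

theorem mono_mul_ab (p : ℕ × ℕ) :
    mono K q p * (𝐚 * 𝐛) = q ^ (p.2 + 1) • mono K q (p.1 + 1, p.2 + 1) := by
  rw [← mul_assoc, mono_mul_a, mono_mul_b]

theorem span_mono : Submodule.span K (Set.range (mono K q)) = ⊤ := by
  set S := Submodule.span K (Set.range (mono K q)) with hS
  have hone : (1 : 𝐁) ∈ S := by
    have : mono K q (0, 0) = 1 := by simp [mono]
    rw [← this]; exact Submodule.subset_span ⟨(0,0), rfl⟩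
  have hmul_a : ∀ s ∈ S, s * 𝐚 ∈ S := by
    intro s hs
    have : S ≤ Submodule.comap (LinearMap.mulRight K 𝐚) S := by
      rw [hS, Submodule.span_le]
      rintro _ ⟨p, rfl⟩
      simp only [SetLike.mem_coe, Submodule.mem_comap, LinearMap.mulRight_apply]
      rw [mono_mul_a]; exact Submodule.subset_span ⟨_, rfl⟩
    simpa using this hs
  have hmul_b : ∀ s ∈ S, s * 𝐛 ∈ S := by
    intro s hs
    have : S ≤ Submodule.comap (LinearMap.mulRight K 𝐛) S := by
      rw [hS, Submodule.span_le]
      rintro _ ⟨p, rfl⟩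
      simp only [SetLike.mem_coe, Submodule.mem_comap, LinearMap.mulRight_apply]
      rw [mono_mul_b]
      exact Submodule.smul_mem _ _ (Submodule.subset_span ⟨_, rfl⟩)
    simpa using this hs
  have key : ∀ x : FreeAlgebra K (Fin 2), ∀ s ∈ S,
      s * RingQuot.mkAlgHom K (QuantumPlaneRel K q) x ∈ S := by
    intro x
    induction x using FreeAlgebra.induction with
    | grade0 r =>
      intro s hs
      rw [AlgHom.commutes, ← Algebra.commutes, ← Algebra.smul_def]
      exact Submodule.smul_mem _ _ hs
    | grade1 i =>
      intro s hs
      fin_cases i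
      · exact hmul_a s hs
      · exact hmul_b s hs
    | mul x y hx hy =>
      intro s hs
      rw [map_mul, ← mul_assoc]
      exact hy _ (hx _ hs)
    | add x y hx hy =>
      intro s hs
      rw [map_add, mul_add]
      exact Submodule.add_mem _ (hx _ hs) (hy _ hs)
  rw [eq_top_iff]
  intro z _
  obtain ⟨x, rfl⟩ := RingQuot.mkAlgHom_surjective K (QuantumPlaneRel K q) z
  simpa using key x 1 hone

/-! ### Representation on functions `ℕ × ℕ → K`, for right cancellation -/

def Arep : (ℕ × ℕ → K) →ₗ[K] (ℕ × ℕ → K) where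
  toFun f p := if p.1 = 0 then 0 else q ^ p.2 * f (p.1 - 1, p.2)
  map_add' f g := by funext p; by_cases h : p.1 = 0 <;> simp [h, mul_add]
  map_smul' c f := by funext p; by_cases h : p.1 = 0 <;> simp [h]; ring

def Brep : (ℕ × ℕ → K) →ₗ[K] (ℕ × ℕ → K) where
  toFun f p := if p.2 = 0 then 0 else f (p.1, p.2 - 1)
  map_add' f g := by funext p; by_cases h : p.2 = 0 <;> simp [h]
  map_smul' c f := by funext p; by_cases h : p.2 = 0 <;> simp [h]

theorem rep_rel :
    (Arep K q * Brep K : Module.End K (ℕ × ℕ → K)) = q • (Brep K * Arep K q) := by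
  apply LinearMap.ext; intro f; funext p
  obtain ⟨i, j⟩ := p
  simp only [Module.End.mul_apply, LinearMap.smul_apply, Pi.smul_apply, smul_eq_mul,
    Arep, Brep, LinearMap.coe_mk, AddHom.coe_mk]
  by_cases hi : i = 0
  · simp [hi]
  · by_cases hj : j = 0
    · simp [hi, hj]
    · obtain ⟨j', rfl⟩ : ∃ j', j = j' + 1 := ⟨j - 1, by omega⟩
      simp only [hi, if_false, Nat.add_sub_cancel, Nat.succ_ne_zero]
      rw [pow_succ]
      ring

def rrep : 𝐁 →ₐ[K] Module.End K (ℕ × ℕ → K) :=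
  RingQuot.liftAlgHom K ⟨FreeAlgebra.lift K ![Arep K q, Brep K], by
    rintro x y ⟨⟩
    simp only [map_mul, map_smul, FreeAlgebra.lift_ι_apply, Matrix.cons_val_zero,
      Matrix.cons_val_one, Matrix.head_cons]
    exact rep_rel K q⟩

theorem rrep_a : rrep K q 𝐚 = Arep K q := by
  simp [rrep, QuantumPlane.a, RingQuot.liftAlgHom_mkAlgHom_apply, FreeAlgebra.lift_ι_apply]

theorem rrep_b : rrep K q 𝐛 = Brep K := by
  simp [rrep, QuantumPlane.b, RingQuot.liftAlgHom_mkAlgHom_apply, FreeAlgebra.lift_ι_apply]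

def ind (p₀ : ℕ × ℕ) : ℕ × ℕ → K := fun p => if p = p₀ then 1 else 0

theorem Arep_ind (k : ℕ) : Arep K q (ind K (k, 0)) = ind K (k + 1, 0) := by
  funext p
  obtain ⟨i, j⟩ := p
  simp only [Arep, ind, LinearMap.coe_mk, AddHom.coe_mk]
  by_cases hi : i = 0
  · simp [hi, Prod.ext_iff]
  · simp only [hi, if_false, Prod.mk.injEq]
    by_cases h : i - 1 = k ∧ j = 0
    · have : i = k + 1 ∧ j = 0 := by omega
      simp [h, this, h.2]
    · have : ¬ (i = k + 1 ∧ j = 0) := by omega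
      simp [h, this]

theorem Brep_ind (k l : ℕ) : Brep K (ind K (k, l)) = ind K (k, l + 1) := by
  funext p
  obtain ⟨i, j⟩ := p
  simp only [Brep, ind, LinearMap.coe_mk, AddHom.coe_mk]
  by_cases hj : j = 0
  · simp [hj, Prod.ext_iff]
  · simp only [hj, if_false, Prod.mk.injEq]
    by_cases h : i = k ∧ j - 1 = l
    · have : i = k ∧ j = l + 1 := by omega
      simp [h.1, h.2, this.2]
    · have : ¬ (i = k ∧ j = l + 1) := by omega
      simp [h, this]

theorem rrep_mono (p : ℕ × ℕ) :
    rrep K q (mono K q p) (ind K (0, 0)) = ind K (p.2, p.1) := by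
  obtain ⟨i, j⟩ := p
  have hA : ∀ n : ℕ, (Arep K q ^ n) (ind K (0, 0)) = ind K (n, 0) := by
    intro n
    induction n with
    | zero => simp
    | succ n ih => rw [pow_succ', Module.End.mul_apply, ih, Arep_ind]
  have hB : ∀ m n : ℕ, (Brep K ^ m) (ind K (n, 0)) = ind K (n, m) := by
    intro m n
    induction m with
    | zero => simp
    | succ m ih => rw [pow_succ', Module.End.mul_apply, ih, Brep_ind]
  simp only [mono, map_mul, map_pow, rrep_a, rrep_b, Module.End.mul_apply]
  rw [hA, hB]

/-- recursive solution for surjectivity of `Arep - 1`. -/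
def solveF (g : ℕ × ℕ → K) : ℕ → ℕ → K
  | 0, j => -(g (0, j))
  | (i + 1), j => q ^ j * solveF g i j - g (i + 1, j)

theorem Arep_sub_one_surj (g : ℕ × ℕ → K) :
    Arep K q (fun p => solveF K q g p.1 p.2) - (fun p => solveF K q g p.1 p.2) = g := by
  funext p
  obtain ⟨i, j⟩ := p
  cases i with
  | zero => simp [Arep, solveF]
  | succ i => simp [Arep, solveF]

theorem rrep_injective_aux (z : 𝐁) (h : rrep K q z = 0) : z = 0 := by
  have hz : z ∈ Submodule.span K (Set.range (mono K q)) := by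
    rw [span_mono]; trivial
  obtain ⟨c, hc⟩ := Finsupp.mem_span_range_iff_exists_finsupp.1 hz
  have hc0 : ∀ p : ℕ × ℕ, c p = 0 := by
    intro p
    have h0 : (rrep K q z) (ind K (0,0)) (p.2, p.1) = 0 := by rw [h]; rfl
    rw [← hc] at h0
    rw [map_finsuppSum] at h0
    rw [Finsupp.sum] at h0
    rw [LinearMap.sum_apply] at h0
    rw [Finset.sum_apply] at h0
    have heq : ∀ p' ∈ c.support,
        ((rrep K q) (c p' • mono K q p')) (ind K (0,0)) (p.2, p.1)
          = if p' = p then c p' else 0 := by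
      intro p' _
      rw [map_smul]
      rw [LinearMap.smul_apply, Pi.smul_apply, rrep_mono, smul_eq_mul]
      simp only [ind]
      by_cases h' : p' = p
      · subst h'; simp
      · have : ¬ ((p.2, p.1) = (p'.2, p'.1)) := by
          simp only [Prod.mk.injEq, not_and]
          intro h2 h1
          exact h' (Prod.ext h1.symm h2.symm)
        simp [h', this]
    rw [Finset.sum_congr rfl heq, Finset.sum_ite_eq' c.support p (fun p' => c p')] at h0
    by_cases hp : p ∈ c.support
    · simpa [hp] using h0
    · exact Finsupp.notMem_support_iff.1 hp
  have : c = 0 := Finsupp.ext fun p => hc0 p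
  rw [← hc, this]
  simp

theorem rmul_a_sub_one_inj (z : 𝐁) (h : z * (𝐚 - 1) = 0) : z = 0 := by
  apply rrep_injective_aux
  have h2 : rrep K q z * (Arep K q - 1) = 0 := by
    have := congrArg (rrep K q) h
    rw [map_mul, map_sub, map_one, map_zero, rrep_a] at this
    exact this
  apply LinearMap.ext
  intro g
  have ⟨f, hf⟩ : ∃ f, Arep K q f - f = g :=
    ⟨fun p => solveF K q g p.1 p.2, Arep_sub_one_surj K q g⟩
  have h3 := LinearMap.ext_iff.mp h2 f
  rw [Module.End.mul_apply, LinearMap.zero_apply, LinearMap.sub_apply,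
    Module.End.one_apply, hf] at h3
  rw [LinearMap.zero_apply]
  exact h3

/-! ### The weight module `W = ℤ →₀ K` -/

def AW : (ℤ →₀ K) →ₗ[K] (ℤ →₀ K) :=
  Finsupp.lsum K fun d => (q ^ (-d - 1) : K) • Finsupp.lsingle (d + 1)

def BW : (ℤ →₀ K) →ₗ[K] (ℤ →₀ K) :=
  Finsupp.lsum K fun d => Finsupp.lsingle (d - 1)

theorem AW_single (d : ℤ) (k : K) :
    AW K q (Finsupp.single d k) = Finsupp.single (d + 1) (q ^ (-d - 1) * k) := by
  rw [AW, Finsupp.lsum_single, LinearMap.smul_apply, Finsupp.lsingle_apply,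
    Finsupp.smul_single, smul_eq_mul]

theorem BW_single (d : ℤ) (k : K) :
    BW K (Finsupp.single d k) = Finsupp.single (d - 1) k := by
  rw [BW, Finsupp.lsum_single, Finsupp.lsingle_apply]

variable {q} in
theorem W_rel (hq0 : q ≠ 0) :
    (AW K q * BW K : Module.End K (ℤ →₀ K)) = q • (BW K * AW K q) := by
  refine Finsupp.lhom_ext fun d k => ?_
  rw [Module.End.mul_apply, LinearMap.smul_apply, Module.End.mul_apply,
    BW_single, AW_single, AW_single, BW_single]
  have h1 : -(d - 1) - 1 = -d := by ring
  rw [h1, sub_add_cancel, Finsupp.smul_single, add_sub_cancel_right, smul_eq_mul]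
  have h2 : (q : K) ^ (-d) = q * q ^ (-d - 1) := by
    rw [mul_comm, ← zpow_add_one₀ hq0]
    congr 1; ring
  rw [h2]; ring_nf

variable {q} in
def sigmaW (hq0 : q ≠ 0) : 𝐁 →ₐ[K] Module.End K (ℤ →₀ K) :=
  RingQuot.liftAlgHom K ⟨FreeAlgebra.lift K ![AW K q, BW K], by
    rintro x y ⟨⟩
    simp only [map_mul, map_smul, FreeAlgebra.lift_ι_apply, Matrix.cons_val_zero,
      Matrix.cons_val_one, Matrix.head_cons]
    exact W_rel K hq0⟩

variable {q} in
theorem sigmaW_a (hq0 : q ≠ 0) : sigmaW K hq0 𝐚 = AW K q := by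
  simp [sigmaW, QuantumPlane.a, RingQuot.liftAlgHom_mkAlgHom_apply, FreeAlgebra.lift_ι_apply]

variable {q} in
theorem sigmaW_b (hq0 : q ≠ 0) : sigmaW K hq0 𝐛 = BW K := by
  simp [sigmaW, QuantumPlane.b, RingQuot.liftAlgHom_mkAlgHom_apply, FreeAlgebra.lift_ι_apply]

variable {q} in
def evW (hq0 : q ≠ 0) : 𝐁 →ₗ[K] (ℤ →₀ K) :=
  (LinearMap.applyₗ (Finsupp.single (0 : ℤ) (1 : K))).comp (sigmaW K hq0).toLinearMap

variable {q} in
theorem evW_apply (hq0 : q ≠ 0) (x : 𝐁) :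
    evW K hq0 x = sigmaW K hq0 x (Finsupp.single (0 : ℤ) (1 : K)) := rfl

variable {q} in
theorem evW_mul (hq0 : q ≠ 0) (y x : 𝐁) :
    evW K hq0 (y * x) = sigmaW K hq0 y (evW K hq0 x) := by
  rw [evW_apply, evW_apply, map_mul, Module.End.mul_apply]

variable {q} in
theorem evW_one (hq0 : q ≠ 0) : evW K hq0 1 = Finsupp.single (0 : ℤ) (1 : K) := by
  rw [evW_apply, map_one, Module.End.one_apply]

variable {q} in
theorem evW_algebraMap_mul (hq0 : q ≠ 0) (k : K) (x : 𝐁) :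
    evW K hq0 (algebraMap K 𝐁 k * x) = k • evW K hq0 x := by
  rw [evW_mul, AlgHom.commutes, Module.algebraMap_end_apply]

/-- the scalar `q^{-j(j+1)/2}` defined recursively. -/
def cc : ℕ → K
  | 0 => 1
  | (j + 1) => q ^ (-(j : ℤ) - 1) * cc j

variable {q} in
theorem cc_ne (hq0 : q ≠ 0) (j : ℕ) : cc K q j ≠ 0 := by
  induction j with
  | zero => simp [cc]
  | succ j ih => exact mul_ne_zero (zpow_ne_zero _ hq0) ih

variable {q} in
theorem AW_pow_w0 (j : ℕ) :
    (AW K q ^ j) (Finsupp.single (0 : ℤ) (1 : K)) = Finsupp.single (j : ℤ) (cc K q j) := by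
  induction j with
  | zero => simp [cc]
  | succ j ih =>
    rw [pow_succ', Module.End.mul_apply, ih, AW_single]
    have h1 : ((j : ℤ)) + 1 = ((j + 1 : ℕ) : ℤ) := by push_cast; ring
    rw [h1]
    rfl

theorem BW_pow (i : ℕ) (d : ℤ) (k : K) :
    (BW K ^ i) (Finsupp.single d k) = Finsupp.single (d - i) k := by
  induction i with
  | zero => simp
  | succ i ih =>
    rw [pow_succ', Module.End.mul_apply, ih, BW_single]
    congr 1
    push_cast
    ring

variable {q} in
theorem evW_mono (hq0 : q ≠ 0) (p : ℕ × ℕ) :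
    evW K hq0 (mono K q p) = Finsupp.single ((p.2 : ℤ) - p.1) (cc K q p.2) := by
  rw [evW_apply, mono, map_mul, map_pow, map_pow, sigmaW_a, sigmaW_b,
    Module.End.mul_apply, AW_pow_w0, BW_pow]

/-! ### The kernel of `evW` is the left ideal generated by `a*b - 1` -/

/-- base point of the diagonal `d`. -/
def pb (d : ℤ) : ℕ × ℕ := if 0 ≤ d then (0, d.toNat) else ((-d).toNat, 0)

variable {q} in
def sW : (ℤ →₀ K) →ₗ[K] 𝐁 :=
  Finsupp.lsum K fun d =>
    LinearMap.toSpanSingleton K 𝐁 ((cc K q (pb d).2)⁻¹ • mono K q (pb d))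

theorem sW_single (d : ℤ) (k : K) :
    sW K (q := q) (Finsupp.single d k)
      = (k * (cc K q (pb d).2)⁻¹) • mono K q (pb d) := by
  rw [sW, Finsupp.lsum_single, LinearMap.toSpanSingleton_apply, smul_smul]

theorem g_mem (p : ℕ × ℕ) :
    q ^ (p.2 + 1) • mono K q (p.1 + 1, p.2 + 1) - mono K q p
      ∈ Ideal.span {𝐚 * 𝐛 - 1} := by
  have h : q ^ (p.2 + 1) • mono K q (p.1 + 1, p.2 + 1) - mono K q p
      = mono K q p * (𝐚 * 𝐛 - 1) := by
    rw [mul_sub, mul_one, mono_mul_ab]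
  rw [h, ← smul_eq_mul]
  exact Submodule.smul_mem _ _ (Submodule.subset_span rfl)

variable {q} in
theorem tele (hq0 : q ≠ 0) (i j k : ℕ) :
    mono K q (i + k, j + k) - (cc K q (j + k) * (cc K q j)⁻¹) • mono K q (i, j)
      ∈ Ideal.span {𝐚 * 𝐛 - 1} := by
  induction k with
  | zero =>
    simp only [Nat.add_zero, mul_inv_cancel₀ (cc_ne K hq0 j), one_smul, sub_self]
    exact Submodule.zero_mem _
  | succ k ih =>
    have hg : q ^ ((j + k) + 1) • mono K q ((i + k) + 1, (j + k) + 1)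
        - mono K q (i + k, j + k) ∈ Ideal.span {𝐚 * 𝐛 - 1} := g_mem K q (i + k, j + k)
    have ht : (q : K) ^ (-((j + k : ℕ) : ℤ) - 1) * q ^ (j + k + 1) = 1 := by
      rw [← zpow_natCast q (j + k + 1), ← zpow_add₀ hq0]
      have : (-((j + k : ℕ) : ℤ) - 1) + ((j + k + 1 : ℕ) : ℤ) = 0 := by push_cast; ring
      rw [this, zpow_zero]
    set t : K := q ^ (-((j + k : ℕ) : ℤ) - 1) with htdef
    have hcc : cc K q (j + k + 1) = t * cc K q (j + k) := by rw [cc]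
    have key : mono K q (i + (k + 1), j + (k + 1))
        - (cc K q (j + (k + 1)) * (cc K q j)⁻¹) • mono K q (i, j)
        = t • (mono K q (i + k, j + k) - (cc K q (j + k) * (cc K q j)⁻¹) • mono K q (i, j))
          + t • (q ^ ((j + k) + 1) • mono K q ((i + k) + 1, (j + k) + 1)
              - mono K q (i + k, j + k)) := by
      show mono K q (i + k + 1, j + k + 1)
          - (cc K q (j + k + 1) * (cc K q j)⁻¹) • mono K q (i, j) = _
      rw [smul_sub, smul_sub, smul_smul, smul_smul, ht, hcc]
      module
    rw [key]
    exact Submodule.add_mem _ (Submodule.smul_of_tower_mem _ t ih)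
      (Submodule.smul_of_tower_mem _ t hg)

set_option maxHeartbeats 800000 in
variable {q} in
theorem sub_s_ev_mem (hq0 : q ≠ 0) (x : 𝐁) :
    x - sW K (q := q) (evW K hq0 x) ∈ Ideal.span {𝐚 * 𝐛 - 1} := by
  set L : 𝐁 →ₗ[K] 𝐁 :=
    LinearMap.id - (sW K (q := q)).comp (evW K hq0) with hL
  have hLx : ∀ y : 𝐁, L y = y - sW K (q := q) (evW K hq0 y) := fun y => rfl
  set N : Submodule K 𝐁 := (Ideal.span {𝐚 * 𝐛 - 1}).restrictScalars K with hN
  have hsub : Submodule.span K (Set.range (mono K q)) ≤ N.comap L := by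
    rw [Submodule.span_le]
    rintro _ ⟨p, rfl⟩
    obtain ⟨i, j⟩ := p
    simp only [SetLike.mem_coe, Submodule.mem_comap]
    rw [hLx, evW_mono, sW_single]
    show mono K q (i, j) - (cc K q j * (cc K q (pb ((j : ℤ) - i)).2)⁻¹) •
        mono K q (pb ((j : ℤ) - i)) ∈ N
    by_cases hij : i ≤ j
    · have hd : (0 : ℤ) ≤ (j : ℤ) - i := by omega
      have hpb : pb ((j : ℤ) - i) = (0, j - i) := by
        rw [pb, if_pos hd]
        congr 1
        omega
      rw [hpb]
      have h1 : j - i + i = j := by omega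
      have := tele K hq0 0 (j - i) i
      rw [Nat.zero_add, h1] at this
      exact this
    · have hd : ¬ ((0 : ℤ) ≤ (j : ℤ) - i) := by omega
      have hpb : pb ((j : ℤ) - i) = (i - j, 0) := by
        rw [pb, if_neg hd]
        congr 1
        omega
      rw [hpb]
      have h1 : i - j + j = i := by omega
      have := tele K hq0 (i - j) 0 j
      rw [Nat.zero_add, h1] at this
      show _ ∈ Ideal.span {𝐚 * 𝐛 - 1}
      simpa [cc] using this
  have : x ∈ N.comap L := by
    apply hsub
    rw [span_mono]
    trivial
  exact (by simpa [hLx] using this : _ ∈ N)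

variable {q} in
theorem evW_ab_sub_one (hq0 : q ≠ 0) : evW K hq0 (𝐚 * 𝐛 - 1) = 0 := by
  rw [map_sub, evW_one, evW_apply, map_mul, Module.End.mul_apply, sigmaW_a, sigmaW_b,
    BW_single, AW_single]
  have h1 : (0 : ℤ) - 1 + 1 = 0 := by ring
  have h2 : -((0 : ℤ) - 1) - 1 = 0 := by ring
  rw [h1, h2, zpow_zero, one_mul, sub_self]

variable {q} in
theorem mem_span_ab_iff (hq0 : q ≠ 0) (x : 𝐁) :
    x ∈ Ideal.span {𝐚 * 𝐛 - 1} ↔ evW K hq0 x = 0 := by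
  constructor
  · intro hx
    obtain ⟨y, hy⟩ := Submodule.mem_span_singleton.1 hx
    rw [← hy, smul_eq_mul, evW_mul, evW_ab_sub_one, map_zero]
  · intro hx
    have := sub_s_ev_mem K hq0 x
    rw [hx, map_zero, sub_zero] at this
    exact this

/-! ### Simplicity of `B ⧸ B(ab-1)` -/

variable {q} in
theorem zpow_inj (hq0 : q ≠ 0) (hq : ∀ k : ℕ, 0 < k → q ^ k ≠ 1)
    {d e : ℤ} (h : q ^ d = q ^ e) : d = e := by
  have key : ∀ m : ℤ, q ^ m = 1 → m = 0 := by
    intro m hm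
    rcases lt_trichotomy m 0 with hlt | heq | hgt
    · exfalso
      apply hq (-m).toNat (by omega)
      have h1 : (q : K) ^ ((-m).toNat : ℤ) = 1 := by
        rw [Int.toNat_of_nonneg (by omega : (0:ℤ) ≤ -m), zpow_neg, hm, inv_one]
      rw [← zpow_natCast q ((-m).toNat)]
      exact h1
    · exact heq
    · exfalso
      apply hq m.toNat (by omega)
      have h1 : (q : K) ^ (m.toNat : ℤ) = 1 := by
        rw [Int.toNat_of_nonneg (by omega : (0:ℤ) ≤ m)]
        exact hm
      rw [← zpow_natCast q m.toNat]
      exact h1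
  have h2 : (q : K) ^ (d - e) = 1 := by
    rw [zpow_sub₀ hq0, h, div_self (zpow_ne_zero _ hq0)]
  have := key _ h2
  omega

variable {q} in
theorem sigma_ab_apply (hq0 : q ≠ 0) (f : ℤ →₀ K) (e : ℤ) :
    (sigmaW K hq0 (𝐚 * 𝐛) f) e = q ^ (-e) * f e := by
  have h2 : (AW K q * BW K : Module.End K (ℤ →₀ K))
      = Finsupp.lsum K (fun d => (q ^ (-d) : K) • Finsupp.lsingle d) := by
    refine Finsupp.lhom_ext fun d k => ?_
    rw [Module.End.mul_apply, BW_single, AW_single, Finsupp.lsum_single,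
      LinearMap.smul_apply, Finsupp.lsingle_apply, Finsupp.smul_single, smul_eq_mul,
      sub_add_cancel]
    have h3 : -(d - 1) - 1 = -d := by ring
    rw [h3]
  have h1 : sigmaW K hq0 (𝐚 * 𝐛) f
      = f.sum fun d k => Finsupp.single d (q ^ (-d) * k) := by
    rw [map_mul, sigmaW_a, sigmaW_b, h2, Finsupp.lsum_apply]
    apply Finsupp.sum_congr
    intro d _
    rw [LinearMap.smul_apply, Finsupp.lsingle_apply, Finsupp.smul_single, smul_eq_mul]
  rw [h1, Finsupp.sum_apply]
  have h4 : (f.sum fun d k => (Finsupp.single d (q ^ (-d) * k)) e)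
      = f.sum fun d k => if d = e then q ^ (-e) * k else 0 := by
    apply Finsupp.sum_congr
    intro d _
    rw [Finsupp.single_apply]
    by_cases hde : d = e
    · subst hde; simp
    · simp [hde]
  rw [h4, Finsupp.sum_ite_eq' f e (fun _ k => q ^ (-e) * k)]
  by_cases he : e ∈ f.support
  · simp [he]
  · rw [if_neg he, Finsupp.notMem_support_iff.1 he, mul_zero]

variable {q} in
theorem AW_pow_single (hq0 : q ≠ 0) (n : ℕ) (d : ℤ) (k : K) :
    ∃ u : K, u ≠ 0 ∧ (AW K q ^ n) (Finsupp.single d k) = Finsupp.single (d + n) (u * k) := by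
  induction n with
  | zero => exact ⟨1, one_ne_zero, by simp⟩
  | succ n ih =>
    obtain ⟨u, hu, hs⟩ := ih
    refine ⟨q ^ (-(d + n) - 1) * u, mul_ne_zero (zpow_ne_zero _ hq0) hu, ?_⟩
    rw [pow_succ', Module.End.mul_apply, hs, AW_single]
    have h1 : d + ((n + 1 : ℕ) : ℤ) = (d + n) + 1 := by push_cast; ring
    rw [h1, mul_assoc]

variable {q} in
theorem isSimple_quot (hq0 : q ≠ 0) (hq : ∀ k : ℕ, 0 < k → q ^ k ≠ 1) :
    IsSimpleModule 𝐁 (𝐁 ⧸ (Ideal.span {𝐚 * 𝐛 - 1} : Ideal 𝐁)) := by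
  set I2 : Ideal 𝐁 := Ideal.span {𝐚 * 𝐛 - 1} with hI2
  have hone' : (1 : 𝐁) ∉ I2 := by
    intro hmem
    have h := (mem_span_ab_iff K hq0 1).1 hmem
    rw [evW_one] at h
    exact one_ne_zero (Finsupp.single_eq_zero.1 h)
  have hone : (Submodule.Quotient.mk (1 : 𝐁) : 𝐁 ⧸ I2) ≠ 0 := fun h =>
    hone' ((Submodule.Quotient.mk_eq_zero I2).1 h)
  have reach : ∀ n : ℕ, ∀ x : 𝐁, ∀ N : Submodule 𝐁 (𝐁 ⧸ I2),
      evW K hq0 x ≠ 0 → (evW K hq0 x).support.card ≤ n →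
      Submodule.Quotient.mk x ∈ N → Submodule.Quotient.mk (1 : 𝐁) ∈ N := by
    intro n
    induction n with
    | zero =>
      intro x N hne hcard _
      exact absurd (Finsupp.support_eq_empty.1 (Finset.card_eq_zero.1 (Nat.le_zero.1 hcard)))
        hne
    | succ n ih =>
      intro x N hne hcard hxN
      by_cases h1 : (evW K hq0 x).support.card ≤ n
      · exact ih x N hne h1 hxN
      by_cases hc1 : (evW K hq0 x).support.card = 1
      · obtain ⟨d, hd0, hsing⟩ := Finsupp.card_support_eq_one.1 hc1
        have hstep : ∃ (z : 𝐁) (k' : K), k' ≠ 0 ∧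
            evW K hq0 (z * x) = Finsupp.single (0 : ℤ) k' := by
          by_cases hda : 0 ≤ d
          · refine ⟨𝐛 ^ d.toNat, evW K hq0 x d, hd0, ?_⟩
            rw [evW_mul, map_pow, sigmaW_b, hsing, BW_pow]
            have h2 : d - (d.toNat : ℤ) = 0 := by
              rw [Int.toNat_of_nonneg hda]; ring
            rw [h2]
            rw [Finsupp.single_eq_same]
          · obtain ⟨u, hu, hs⟩ := AW_pow_single K hq0 (-d).toNat d (evW K hq0 x d)
            refine ⟨𝐚 ^ (-d).toNat, u * evW K hq0 x d, mul_ne_zero hu hd0, ?_⟩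
            rw [evW_mul, map_pow, sigmaW_a, hsing, hs]
            have h2 : d + ((-d).toNat : ℤ) = 0 := by
              rw [Int.toNat_of_nonneg (by omega : (0:ℤ) ≤ -d)]; ring
            rw [h2]
            rw [Finsupp.single_eq_same]
        obtain ⟨z, k', hk', hz⟩ := hstep
        set x₂ := algebraMap K 𝐁 (k'⁻¹) * (z * x) with hx2
        have hx2N : Submodule.Quotient.mk x₂ ∈ N := by
          have h3 : (Submodule.Quotient.mk x₂ : 𝐁 ⧸ I2)
              = (algebraMap K 𝐁 (k'⁻¹) * z) • Submodule.Quotient.mk x := by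
            rw [← Submodule.Quotient.mk_smul, smul_eq_mul, hx2, mul_assoc]
          rw [h3]
          exact N.smul_mem _ hxN
        have hev2 : evW K hq0 x₂ = Finsupp.single (0 : ℤ) 1 := by
          rw [hx2, evW_algebraMap_mul, hz, Finsupp.smul_single, smul_eq_mul,
            inv_mul_cancel₀ hk']
        have h4 : (Submodule.Quotient.mk x₂ : 𝐁 ⧸ I2) = Submodule.Quotient.mk (1 : 𝐁) := by
          rw [Submodule.Quotient.eq]
          apply (mem_span_ab_iff K hq0 _).2
          rw [map_sub, hev2, evW_one, sub_self]
        rw [← h4]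
        exact hx2N
      · have hpos : 0 < (evW K hq0 x).support.card :=
          Finset.card_pos.2 (Finsupp.support_nonempty_iff.2 hne)
        have hne'' : (evW K hq0 x).support.Nonempty := Finset.card_pos.1 hpos
        obtain ⟨d₁, hd₁⟩ := hne''
        set x' := 𝐚 * 𝐛 * x - algebraMap K 𝐁 (q ^ (-d₁)) * x with hx'
        have hmk' : Submodule.Quotient.mk x' ∈ N := by
          have h5 : (Submodule.Quotient.mk x' : 𝐁 ⧸ I2)
              = (𝐚 * 𝐛) • Submodule.Quotient.mk x
                - (algebraMap K 𝐁 (q ^ (-d₁))) • Submodule.Quotient.mk x := by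
            rw [hx', Submodule.Quotient.mk_sub, ← Submodule.Quotient.mk_smul,
              ← Submodule.Quotient.mk_smul, smul_eq_mul, smul_eq_mul]
          rw [h5]
          exact Submodule.sub_mem _ (N.smul_mem _ hxN) (N.smul_mem _ hxN)
        have hco : ∀ e : ℤ, evW K hq0 x' e = (q ^ (-e) - q ^ (-d₁)) * evW K hq0 x e := by
          intro e
          rw [hx', map_sub, Finsupp.sub_apply, evW_mul, evW_algebraMap_mul,
            sigma_ab_apply, Finsupp.smul_apply, smul_eq_mul]
          ring
        have hsupp : (evW K hq0 x').support = (evW K hq0 x).support.erase d₁ := by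
          ext e
          rw [Finsupp.mem_support_iff, hco, Finset.mem_erase, Finsupp.mem_support_iff]
          constructor
          · intro h
            have h6 := mul_ne_zero_iff.1 h
            refine ⟨?_, h6.2⟩
            intro heq
            subst heq
            exact h6.1 (sub_self _)
          · rintro ⟨hde, hfe⟩
            apply mul_ne_zero _ hfe
            rw [sub_ne_zero]
            intro hqq
            exact hde (by have := zpow_inj K hq0 hq hqq; omega)
        have hne' : evW K hq0 x' ≠ 0 := by
          rw [← Finsupp.support_nonempty_iff, hsupp, ← Finset.card_pos,
            Finset.card_erase_of_mem hd₁]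
          omega
        have hcard' : (evW K hq0 x').support.card ≤ n := by
          rw [hsupp, Finset.card_erase_of_mem hd₁]
          omega
        exact ih x' N hne' hcard' hmk'
  haveI : Nontrivial (Submodule 𝐁 (𝐁 ⧸ I2)) := by
    refine ⟨⊥, ⊤, fun hbt => ?_⟩
    have : (Submodule.Quotient.mk (1 : 𝐁) : 𝐁 ⧸ I2) ∈ (⊥ : Submodule 𝐁 (𝐁 ⧸ I2)) := by
      rw [hbt]; trivial
    exact hone (Submodule.mem_bot _ |>.1 this)
  refine (isSimpleModule_iff ..).mpr ⟨fun N => ?_⟩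
  by_cases hbot : N = ⊥
  · left; exact hbot
  · right
    obtain ⟨xq, hxN, hx0⟩ := (Submodule.ne_bot_iff N).1 hbot
    obtain ⟨x, rfl⟩ := Submodule.Quotient.mk_surjective I2 xq
    have hev : evW K hq0 x ≠ 0 := by
      intro h
      exact hx0 ((Submodule.Quotient.mk_eq_zero I2).2 ((mem_span_ab_iff K hq0 x).2 h))
    have hone_mem := reach (evW K hq0 x).support.card x N hev le_rfl hxN
    rw [eq_top_iff]
    rintro yq -
    obtain ⟨y, rfl⟩ := Submodule.Quotient.mk_surjective I2 yq
    have h7 : (Submodule.Quotient.mk y : 𝐁 ⧸ I2) = y • Submodule.Quotient.mk (1 : 𝐁) := by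
      rw [← Submodule.Quotient.mk_smul, smul_eq_mul, mul_one]
    rw [h7]
    exact N.smul_mem y hone_mem

/-! ### The map `x ↦ x(a-1)` and transfer to `J/I` -/

variable {q} in
def rmulA1 : 𝐁 →ₗ[𝐁] 𝐁 where
  toFun x := x * (𝐚 - 1)
  map_add' x y := add_mul x y _
  map_smul' r x := by simp [smul_eq_mul, mul_assoc]

theorem rmulA1_apply (x : 𝐁) : rmulA1 K (q := q) x = x * (𝐚 - 1) := rfl

theorem range_rmulA1 :
    LinearMap.range (rmulA1 K (q := q)) = Ideal.span {𝐚 - 1} := by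
  ext y
  constructor
  · rintro ⟨x, hx⟩
    exact Submodule.mem_span_singleton.2 ⟨x, by rw [smul_eq_mul, ← rmulA1_apply, hx]⟩
  · intro h
    obtain ⟨c, hc⟩ := Submodule.mem_span_singleton.1 h
    exact ⟨c, by rw [rmulA1_apply, ← smul_eq_mul, hc]⟩

end

end QPAux

/-- In the quantum plane `B = B(q)` with `q` not a root of unity, for the left ideals
`I = B(ab-1)(a-1) ⊆ J = B(a-1)`, the module `V = J/I` (realized as the image of `J` in
`B/I`) is a simple left `B`-module. -/
theorem quantumPlane_V_isSimple (K : Type) [Field K] (q : K) (hq0 : q ≠ 0)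
    (hq : ∀ k : ℕ, 0 < k → q ^ k ≠ 1) :
    IsSimpleModule (QuantumPlane K q)
      (Submodule.map
        (Ideal.span {(QuantumPlane.a K q * QuantumPlane.b K q - 1) *
          (QuantumPlane.a K q - 1)} : Ideal (QuantumPlane K q)).mkQ
        (Ideal.span {QuantumPlane.a K q - 1} : Ideal (QuantumPlane K q))) := by
  set I : Ideal (QuantumPlane K q) :=
    Ideal.span {(QuantumPlane.a K q * QuantumPlane.b K q - 1) *
      (QuantumPlane.a K q - 1)} with hI
  set I2 : Ideal (QuantumPlane K q) :=
    Ideal.span {QuantumPlane.a K q * QuantumPlane.b K q - 1} with hI2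
  set Θ : QuantumPlane K q →ₗ[QuantumPlane K q] QuantumPlane K q ⧸ I :=
    I.mkQ.comp (QPAux.rmulA1 K (q := q)) with hΘ
  have hrange : LinearMap.range Θ
      = Submodule.map I.mkQ (Ideal.span {QuantumPlane.a K q - 1}) := by
    rw [hΘ, LinearMap.range_comp, QPAux.range_rmulA1]
  have hker : LinearMap.ker Θ = I2 := by
    ext x
    rw [LinearMap.mem_ker]
    have hx : Θ x = I.mkQ (x * (QuantumPlane.a K q - 1)) := rfl
    rw [hx]
    have hmk : I.mkQ (x * (QuantumPlane.a K q - 1)) = 0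
        ↔ x * (QuantumPlane.a K q - 1) ∈ I := Submodule.Quotient.mk_eq_zero I
    rw [hmk]
    constructor
    · intro hmem
      obtain ⟨y, hy⟩ := Submodule.mem_span_singleton.1 hmem
      rw [smul_eq_mul] at hy
      have h0 : (x - y * (QuantumPlane.a K q * QuantumPlane.b K q - 1)) *
          (QuantumPlane.a K q - 1) = 0 := by
        rw [sub_mul, mul_assoc, hy, sub_self]
      have h1 := QPAux.rmul_a_sub_one_inj K q _ h0
      have h2 : x = y * (QuantumPlane.a K q * QuantumPlane.b K q - 1) :=
        sub_eq_zero.1 h1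
      exact Submodule.mem_span_singleton.2 ⟨y, by rw [smul_eq_mul, ← h2]⟩
    · intro hmem
      obtain ⟨y, hy⟩ := Submodule.mem_span_singleton.1 hmem
      rw [smul_eq_mul] at hy
      exact Submodule.mem_span_singleton.2
        ⟨y, by rw [smul_eq_mul, ← mul_assoc, hy]⟩
  haveI hsimple : IsSimpleModule (QuantumPlane K q) (QuantumPlane K q ⧸ I2) :=
    QPAux.isSimple_quot K hq0 hq
  let e1 : (Submodule.map I.mkQ (Ideal.span {QuantumPlane.a K q - 1}))
      ≃ₗ[QuantumPlane K q] LinearMap.range Θ :=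
    LinearEquiv.ofEq _ _ hrange.symm
  let e2 : (LinearMap.range Θ) ≃ₗ[QuantumPlane K q]
      QuantumPlane K q ⧸ LinearMap.ker Θ :=
    (LinearMap.quotKerEquivRange Θ).symm
  let e3 : (QuantumPlane K q ⧸ LinearMap.ker Θ) ≃ₗ[QuantumPlane K q]
      QuantumPlane K q ⧸ I2 :=
    Submodule.quotEquivOfEq _ _ hker
  exact IsSimpleModule.congr ((e1.trans e2).trans e3)

end
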